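/- Let f(x,y) = 2xy, let Δz ∈ ℝ, let p₁, p₂, p₃ ∈ ℝ² with pᵢ = (xᵢ, yᵢ), let T be their convex hull, and let ℓ be an affine function on ℝ² with ℓ(pᵢ) = f(pᵢ) + Δz for i = 1,2,3. Then the supremum of |ℓ(x,y) − f(x,y)| over (x,y) ∈ T equals max{ |Δz| , |Δz + (x₁−x₂)(y₁−y₂)/2| , |Δz + (x₂−x₃)(y₂−y₃)/2| , |Δz + (x₁−x₃)(y₁−y₃)/2| }. -/

import Mathlib

private lemma step_aux (x d y e : ℝ) (hd : d < 0) (h : 0 ≤ y*(-d) + x*e) :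
    0 ≤ y + (x/(-d))*e := by
  have hd' : 0 < -d := by linarith
  have hd0 : d ≠ 0 := ne_of_lt hd
  have heq : y + (x/(-d))*e = (y*(-d) + x*e)/(-d) := by field_simp; ring
  rw [heq]
  exact div_nonneg h hd'.le

private lemma pick1 (a b c d1 d2 d3 : ℝ) (ha : 0 ≤ a)
    (h1 : d1 < 0) (hb2 : 0 ≤ b*(-d1) + a*d2) (hc3 : 0 ≤ c*(-d1) + a*d3) :
    ∃ t, 0 ≤ t ∧ 0 ≤ a + t*d1 ∧ 0 ≤ b + t*d2 ∧ 0 ≤ c + t*d3 ∧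
      (a + t*d1 = 0 ∨ b + t*d2 = 0 ∨ c + t*d3 = 0) := by
  have hd' : 0 < -d1 := by linarith
  have hd0 : d1 ≠ 0 := ne_of_lt h1
  have hzero : a + (a/(-d1))*d1 = 0 := by field_simp; ring
  exact ⟨a/(-d1), div_nonneg ha hd'.le, le_of_eq hzero.symm,
    step_aux a d1 b d2 h1 hb2, step_aux a d1 c d3 h1 hc3, Or.inl hzero⟩

private lemma reach (a b c d1 d2 d3 : ℝ) (ha : 0 ≤ a) (hb : 0 ≤ b) (hc : 0 ≤ c)
    (hsum : d1 + d2 + d3 = 0) (hne : ¬(d1 = 0 ∧ d2 = 0 ∧ d3 = 0)) :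
    ∃ t, 0 ≤ t ∧ 0 ≤ a + t*d1 ∧ 0 ≤ b + t*d2 ∧ 0 ≤ c + t*d3 ∧
      (a + t*d1 = 0 ∨ b + t*d2 = 0 ∨ c + t*d3 = 0) := by
  by_cases h1 : d1 < 0
  · by_cases h2 : d2 < 0
    · by_cases h3 : d3 < 0
      · exfalso; linarith
      · have hd3 : 0 ≤ d3 := not_lt.1 h3
        rcases le_total (a*(-d2)) (b*(-d1)) with hcmp|hcmp
        · exact pick1 a b c d1 d2 d3 ha h1 (by nlinarith)
            (by nlinarith [mul_nonneg hc (show (0:ℝ) ≤ -d1 by linarith), mul_nonneg ha hd3])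
        · obtain ⟨t, h0, hx1, hx2, hx3, hx4⟩ := pick1 b a c d2 d1 d3 hb h2 (by nlinarith)
            (by nlinarith [mul_nonneg hc (show (0:ℝ) ≤ -d2 by linarith), mul_nonneg hb hd3])
          exact ⟨t, h0, hx2, hx1, hx3, by tauto⟩
    · have hd2 : 0 ≤ d2 := not_lt.1 h2
      by_cases h3 : d3 < 0
      · rcases le_total (a*(-d3)) (c*(-d1)) with hcmp|hcmp
        · exact pick1 a b c d1 d2 d3 ha h1
            (by nlinarith [mul_nonneg hb (show (0:ℝ) ≤ -d1 by linarith), mul_nonneg ha hd2])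
            (by nlinarith)
        · obtain ⟨t, h0, hx1, hx2, hx3, hx4⟩ := pick1 c b a d3 d2 d1 hc h3
            (by nlinarith [mul_nonneg hb (show (0:ℝ) ≤ -d3 by linarith), mul_nonneg hc hd2])
            (by nlinarith)
          exact ⟨t, h0, hx3, hx2, hx1, by tauto⟩
      · have hd3 : 0 ≤ d3 := not_lt.1 h3
        exact pick1 a b c d1 d2 d3 ha h1
          (by nlinarith [mul_nonneg hb (show (0:ℝ) ≤ -d1 by linarith), mul_nonneg ha hd2])
          (by nlinarith [mul_nonneg hc (show (0:ℝ) ≤ -d1 by linarith), mul_nonneg ha hd3])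
  · have hd1 : 0 ≤ d1 := not_lt.1 h1
    by_cases h2 : d2 < 0
    · by_cases h3 : d3 < 0
      · rcases le_total (b*(-d3)) (c*(-d2)) with hcmp|hcmp
        · obtain ⟨t, h0, hx1, hx2, hx3, hx4⟩ := pick1 b a c d2 d1 d3 hb h2
            (by nlinarith [mul_nonneg ha (show (0:ℝ) ≤ -d2 by linarith), mul_nonneg hb hd1])
            (by nlinarith)
          exact ⟨t, h0, hx2, hx1, hx3, by tauto⟩
        · obtain ⟨t, h0, hx1, hx2, hx3, hx4⟩ := pick1 c a b d3 d1 d2 hc h3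
            (by nlinarith [mul_nonneg ha (show (0:ℝ) ≤ -d3 by linarith), mul_nonneg hc hd1])
            (by nlinarith)
          exact ⟨t, h0, hx2, hx3, hx1, by tauto⟩
      · have hd3 : 0 ≤ d3 := not_lt.1 h3
        obtain ⟨t, h0, hx1, hx2, hx3, hx4⟩ := pick1 b a c d2 d1 d3 hb h2
          (by nlinarith [mul_nonneg ha (show (0:ℝ) ≤ -d2 by linarith), mul_nonneg hb hd1])
          (by nlinarith [mul_nonneg hc (show (0:ℝ) ≤ -d2 by linarith), mul_nonneg hb hd3])
        exact ⟨t, h0, hx2, hx1, hx3, by tauto⟩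
    · have hd2 : 0 ≤ d2 := not_lt.1 h2
      by_cases h3 : d3 < 0
      · obtain ⟨t, h0, hx1, hx2, hx3, hx4⟩ := pick1 c a b d3 d1 d2 hc h3
          (by nlinarith [mul_nonneg ha (show (0:ℝ) ≤ -d3 by linarith), mul_nonneg hc hd1])
          (by nlinarith [mul_nonneg hb (show (0:ℝ) ≤ -d3 by linarith), mul_nonneg hc hd2])
        exact ⟨t, h0, hx2, hx3, hx1, by tauto⟩
      · exfalso
        have hd3 : 0 ≤ d3 := not_lt.1 h3
        exact hne ⟨by linarith, by linarith, by linarith⟩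

private lemma edge_bound (u v w M A B C : ℝ) (hM : 0 ≤ M)
    (hu : u ≤ 2*M) (hv : v ≤ 2*M) (hw : w ≤ 2*M)
    (hA : 0 ≤ A) (hB : 0 ≤ B) (hC : 0 ≤ C) (hsum : A+B+C = 1)
    (hz : A = 0 ∨ B = 0 ∨ C = 0) :
    2*(A*B*u + B*C*v + A*C*w) ≤ M := by
  rcases hz with h|h|h
  · subst h
    have hC' : C = 1 - B := by linarith
    subst hC'
    nlinarith [mul_nonneg hM (sq_nonneg (1-2*B)),
      mul_nonneg (mul_nonneg hB (show (0:ℝ) ≤ 1-B by linarith)) (show (0:ℝ) ≤ 2*M - v by linarith)]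
  · subst h
    have hC' : C = 1 - A := by linarith
    subst hC'
    nlinarith [mul_nonneg hM (sq_nonneg (1-2*A)),
      mul_nonneg (mul_nonneg hA (show (0:ℝ) ≤ 1-A by linarith)) (show (0:ℝ) ≤ 2*M - w by linarith)]
  · subst h
    have hB' : B = 1 - A := by linarith
    subst hB'
    nlinarith [mul_nonneg hM (sq_nonneg (1-2*A)),
      mul_nonneg (mul_nonneg hA (show (0:ℝ) ≤ 1-A by linarith)) (show (0:ℝ) ≤ 2*M - u by linarith)]

private lemma tri_bound (s1 s2 t1 t2 M a b c : ℝ) (hM : 0 ≤ M)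
    (h1 : s1*t1 ≤ 2*M) (h2 : s2*t2 ≤ 2*M) (h3 : (s1+s2)*(t1+t2) ≤ 2*M)
    (ha : 0 ≤ a) (hb : 0 ≤ b) (hc : 0 ≤ c) (habc : a + b + c = 1) :
    2*(a*b*(s1*t1) + b*c*(s2*t2) + a*c*((s1+s2)*(t1+t2))) ≤ M := by
  by_cases hs : s1 = 0 ∧ s2 = 0
  · obtain ⟨e1, e2⟩ := hs
    rw [e1, e2]
    have hzz : 2*(a*b*((0:ℝ)*t1) + b*c*((0:ℝ)*t2) + a*c*(((0:ℝ)+0)*(t1+t2))) = 0 := by ring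
    linarith
  · set Lc := 2*((a*(-s1-s2) + b*s2)*(s1*t1) + (b*s1 + c*(-s1-s2))*(s2*t2)
      + (a*s1 + c*s2)*((s1+s2)*(t1+t2))) with hLc
    rcases le_or_gt 0 Lc with hL|hL
    · obtain ⟨t, ht, hA, hB, hC, hz⟩ := reach a b c s2 (-s1-s2) s1 ha hb hc (by ring)
        (fun h => hs ⟨h.2.2, h.1⟩)
      have hbnd := edge_bound (s1*t1) (s2*t2) ((s1+s2)*(t1+t2)) M
        (a+t*s2) (b+t*(-s1-s2)) (c+t*s1) hM h1 h2 h3 hA hB hC (by linear_combination habc) hz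
      have hid : 2*((a+t*s2)*(b+t*(-s1-s2))*(s1*t1) + (b+t*(-s1-s2))*(c+t*s1)*(s2*t2)
          + (a+t*s2)*(c+t*s1)*((s1+s2)*(t1+t2)))
          = 2*(a*b*(s1*t1) + b*c*(s2*t2) + a*c*((s1+s2)*(t1+t2))) + t*Lc := by
        rw [hLc]; ring
      nlinarith [mul_nonneg ht hL]
    · obtain ⟨t, ht, hA, hB, hC, hz⟩ := reach a b c (-s2) (s1+s2) (-s1) ha hb hc (by ring)
        (fun h => hs ⟨by linarith [h.2.2, neg_eq_zero.1 h.2.2], by linarith [neg_eq_zero.1 h.1]⟩)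
      have hbnd := edge_bound (s1*t1) (s2*t2) ((s1+s2)*(t1+t2)) M
        (a+t*(-s2)) (b+t*(s1+s2)) (c+t*(-s1)) hM h1 h2 h3 hA hB hC (by linear_combination habc) hz
      have hid : 2*((a+t*(-s2))*(b+t*(s1+s2))*(s1*t1) + (b+t*(s1+s2))*(c+t*(-s1))*(s2*t2)
          + (a+t*(-s2))*(c+t*(-s1))*((s1+s2)*(t1+t2)))
          = 2*(a*b*(s1*t1) + b*c*(s2*t2) + a*c*((s1+s2)*(t1+t2))) + (-t)*Lc := by
        rw [hLc]; ring
      nlinarith [mul_nonneg ht (show (0:ℝ) ≤ -Lc by linarith)]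

private lemma val_lemma (u v w Δz a b c x1 y1 x2 y2 x3 y3 : ℝ)
    (e₁ : u*x1 + v*y1 + w = 2*x1*y1 + Δz) (e₂ : u*x2 + v*y2 + w = 2*x2*y2 + Δz)
    (e₃ : u*x3 + v*y3 + w = 2*x3*y3 + Δz) (habc : a + b + c = 1) :
    u*(a*x1+b*x2+c*x3) + v*(a*y1+b*y2+c*y3) + w
      - 2*(a*x1+b*x2+c*x3)*(a*y1+b*y2+c*y3)
    = Δz + 2*(a*b*((x1-x2)*(y1-y2)) + b*c*((x2-x3)*(y2-y3))
      + a*c*(((x1-x2)+(x2-x3))*((y1-y2)+(y2-y3)))) := by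
  have hc : c = 1 - a - b := by linarith
  subst hc
  linear_combination a*e₁ + b*e₂ + (1-a-b)*e₃

/-- For the saddle f(x,y) = 2xy and the affine function ℓ with common vertical offset
Δz at the three vertices, the maximal vertical error over the triangle equals
max { |Δz| , |Δz + (xᵢ-xⱼ)(yᵢ-yⱼ)/2| over the edges }. -/
theorem stmt_5 (Δz : ℝ) (p₁ p₂ p₃ : ℝ × ℝ) (ℓ : ℝ × ℝ → ℝ) (u v w : ℝ)
    (hℓ : ∀ q : ℝ × ℝ, ℓ q = u*q.1 + v*q.2 + w)
    (h₁ : ℓ p₁ = 2*p₁.1*p₁.2 + Δz) (h₂ : ℓ p₂ = 2*p₂.1*p₂.2 + Δz)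
    (h₃ : ℓ p₃ = 2*p₃.1*p₃.2 + Δz) :
    IsGreatest {E : ℝ | ∃ q ∈ convexHull ℝ ({p₁, p₂, p₃} : Set (ℝ × ℝ)),
        E = |ℓ q - 2*q.1*q.2|}
      (max (max |Δz| |Δz + (p₁.1-p₂.1)*(p₁.2-p₂.2)/2|)
        (max |Δz + (p₂.1-p₃.1)*(p₂.2-p₃.2)/2| |Δz + (p₁.1-p₃.1)*(p₁.2-p₃.2)/2|)) := by
  have e₁ : u*p₁.1 + v*p₁.2 + w = 2*p₁.1*p₁.2 + Δz := by rw [← hℓ p₁]; exact h₁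
  have e₂ : u*p₂.1 + v*p₂.2 + w = 2*p₂.1*p₂.2 + Δz := by rw [← hℓ p₂]; exact h₂
  have e₃ : u*p₃.1 + v*p₃.2 + w = 2*p₃.1*p₃.2 + Δz := by rw [← hℓ p₃]; exact h₃
  have hmem₁ : p₁ ∈ convexHull ℝ ({p₁, p₂, p₃} : Set (ℝ × ℝ)) :=
    subset_convexHull ℝ _ (by simp)
  have hmem₂ : p₂ ∈ convexHull ℝ ({p₁, p₂, p₃} : Set (ℝ × ℝ)) :=
    subset_convexHull ℝ _ (by simp)
  have hmem₃ : p₃ ∈ convexHull ℝ ({p₁, p₂, p₃} : Set (ℝ × ℝ)) :=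
    subset_convexHull ℝ _ (by simp)
  have hconv : Convex ℝ (convexHull ℝ ({p₁, p₂, p₃} : Set (ℝ × ℝ))) := convex_convexHull ℝ _
  -- midpoints
  have hmid : ∀ pa pb : ℝ × ℝ, pa ∈ convexHull ℝ ({p₁, p₂, p₃} : Set (ℝ × ℝ)) →
      pb ∈ convexHull ℝ ({p₁, p₂, p₃} : Set (ℝ × ℝ)) →
      ((1/2:ℝ) • pa + (1/2:ℝ) • pb) ∈ convexHull ℝ ({p₁, p₂, p₃} : Set (ℝ × ℝ)) := by
    intro pa pb hpa hpb
    exact hconv hpa hpb (by norm_num) (by norm_num) (by norm_num)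
  have hmidval : ∀ pa pb : ℝ × ℝ, (u*pa.1 + v*pa.2 + w = 2*pa.1*pa.2 + Δz) →
      (u*pb.1 + v*pb.2 + w = 2*pb.1*pb.2 + Δz) →
      ℓ ((1/2:ℝ) • pa + (1/2:ℝ) • pb) - 2*((1/2:ℝ) • pa + (1/2:ℝ) • pb).1
        * ((1/2:ℝ) • pa + (1/2:ℝ) • pb).2
      = Δz + (pa.1-pb.1)*(pa.2-pb.2)/2 := by
    intro pa pb ea eb
    have hq1 : ((1/2:ℝ) • pa + (1/2:ℝ) • pb).1 = (1/2)*pa.1 + (1/2)*pb.1 := by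
      simp [Prod.fst_add]
    have hq2 : ((1/2:ℝ) • pa + (1/2:ℝ) • pb).2 = (1/2)*pa.2 + (1/2)*pb.2 := by
      simp [Prod.snd_add]
    rw [hℓ _, hq1, hq2]
    linear_combination (1/2)*ea + (1/2)*eb
  constructor
  · -- membership: the max is attained
    rcases max_cases (max |Δz| |Δz + (p₁.1-p₂.1)*(p₁.2-p₂.2)/2|)
        (max |Δz + (p₂.1-p₃.1)*(p₂.2-p₃.2)/2| |Δz + (p₁.1-p₃.1)*(p₁.2-p₃.2)/2|) with
      ⟨hEq, _⟩|⟨hEq, _⟩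
    · rcases max_cases |Δz| |Δz + (p₁.1-p₂.1)*(p₁.2-p₂.2)/2| with ⟨hEq2, _⟩|⟨hEq2, _⟩
      · refine ⟨p₁, hmem₁, ?_⟩
        rw [hEq, hEq2]
        have : ℓ p₁ - 2*p₁.1*p₁.2 = Δz := by linarith
        rw [this]
      · refine ⟨(1/2:ℝ) • p₁ + (1/2:ℝ) • p₂, hmid p₁ p₂ hmem₁ hmem₂, ?_⟩
        rw [hEq, hEq2, hmidval p₁ p₂ e₁ e₂]
    · rcases max_cases |Δz + (p₂.1-p₃.1)*(p₂.2-p₃.2)/2| |Δz + (p₁.1-p₃.1)*(p₁.2-p₃.2)/2| with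
        ⟨hEq2, _⟩|⟨hEq2, _⟩
      · refine ⟨(1/2:ℝ) • p₂ + (1/2:ℝ) • p₃, hmid p₂ p₃ hmem₂ hmem₃, ?_⟩
        rw [hEq, hEq2, hmidval p₂ p₃ e₂ e₃]
      · refine ⟨(1/2:ℝ) • p₁ + (1/2:ℝ) • p₃, hmid p₁ p₃ hmem₁ hmem₃, ?_⟩
        rw [hEq, hEq2, hmidval p₁ p₃ e₁ e₃]
  · -- upper bound
    rintro E ⟨q, hq, rfl⟩
    set V := max (max |Δz| |Δz + (p₁.1-p₂.1)*(p₁.2-p₂.2)/2|)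
      (max |Δz + (p₂.1-p₃.1)*(p₂.2-p₃.2)/2| |Δz + (p₁.1-p₃.1)*(p₁.2-p₃.2)/2|) with hV
    have hV1 : |Δz| ≤ V := le_trans (le_max_left _ _) (le_max_left _ _)
    have hV2 : |Δz + (p₁.1-p₂.1)*(p₁.2-p₂.2)/2| ≤ V :=
      le_trans (le_max_right _ _) (le_max_left _ _)
    have hV3 : |Δz + (p₂.1-p₃.1)*(p₂.2-p₃.2)/2| ≤ V :=
      le_trans (le_max_left _ _) (le_max_right _ _)
    have hV4 : |Δz + (p₁.1-p₃.1)*(p₁.2-p₃.2)/2| ≤ V :=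
      le_trans (le_max_right _ _) (le_max_right _ _)
    -- extract barycentric coordinates
    rw [show ({p₁, p₂, p₃} : Set (ℝ × ℝ)) = insert p₁ {p₂, p₃} from rfl,
      convexHull_insert ⟨p₂, by simp⟩, convexHull_pair] at hq
    rw [mem_convexJoin] at hq
    obtain ⟨x₀, hx₀, z, hz, hqz⟩ := hq
    rw [Set.mem_singleton_iff] at hx₀
    rw [hx₀] at hqz
    obtain ⟨b', c', hb', hc', hbc', hzeq⟩ := hz
    obtain ⟨a, m, ha, hm, ham, hqeq⟩ := hqz
    have hx : q.1 = a*p₁.1 + (m*b')*p₂.1 + (m*c')*p₃.1 := by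
      rw [← hqeq, ← hzeq]
      simp [Prod.fst_add, Prod.smul_fst, smul_eq_mul]
      ring
    have hy : q.2 = a*p₁.2 + (m*b')*p₂.2 + (m*c')*p₃.2 := by
      rw [← hqeq, ← hzeq]
      simp [Prod.snd_add, Prod.smul_snd, smul_eq_mul]
      ring
    set b := m*b' with hbdef
    set c := m*c' with hcdef
    have hb : 0 ≤ b := mul_nonneg hm hb'
    have hc : 0 ≤ c := mul_nonneg hm hc'
    have habc : a + b + c = 1 := by
      rw [hbdef, hcdef]
      have : m*b' + m*c' = m := by rw [← mul_add, hbc', mul_one]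
      linarith
    have hval : ℓ q - 2*q.1*q.2
        = Δz + 2*(a*b*((p₁.1-p₂.1)*(p₁.2-p₂.2)) + b*c*((p₂.1-p₃.1)*(p₂.2-p₃.2))
          + a*c*(((p₁.1-p₂.1)+(p₂.1-p₃.1))*((p₁.2-p₂.2)+(p₂.2-p₃.2)))) := by
      rw [hℓ q, hx, hy]
      exact val_lemma u v w Δz a b c p₁.1 p₁.2 p₂.1 p₂.2 p₃.1 p₃.2 e₁ e₂ e₃ habc
    rw [hval]
    have hVd0 : 0 ≤ V - Δz := by
      have := le_abs_self Δz; linarith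
    have hVd0' : 0 ≤ V + Δz := by
      have := neg_abs_le Δz; linarith
    have habs2 := abs_le.1 hV2
    have habs3 := abs_le.1 hV3
    have habs4 := abs_le.1 hV4
    rw [abs_le]
    constructor
    · -- lower bound: apply tri_bound with negated t's
      have hb1 : (p₁.1-p₂.1)*(-(p₁.2-p₂.2)) ≤ 2*(V + Δz) := by
        have hid : (p₁.1-p₂.1)*(-(p₁.2-p₂.2)) = -((p₁.1-p₂.1)*(p₁.2-p₂.2)) := by ring
        linarith [habs2.1]
      have hb2 : (p₂.1-p₃.1)*(-(p₂.2-p₃.2)) ≤ 2*(V + Δz) := by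
        have hid : (p₂.1-p₃.1)*(-(p₂.2-p₃.2)) = -((p₂.1-p₃.1)*(p₂.2-p₃.2)) := by ring
        linarith [habs3.1]
      have hb3 : ((p₁.1-p₂.1)+(p₂.1-p₃.1))*(-(p₁.2-p₂.2) + -(p₂.2-p₃.2)) ≤ 2*(V + Δz) := by
        have hid : ((p₁.1-p₂.1)+(p₂.1-p₃.1))*(-(p₁.2-p₂.2) + -(p₂.2-p₃.2))
            = -((p₁.1-p₃.1)*(p₁.2-p₃.2)) := by ring
        linarith [habs4.1]
      have hbd := tri_bound (p₁.1-p₂.1) (p₂.1-p₃.1) (-(p₁.2-p₂.2)) (-(p₂.2-p₃.2)) (V+Δz) a b c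
        hVd0' hb1 hb2 hb3 ha hb hc habc
      have hid2 : 2*(a*b*((p₁.1-p₂.1)*(-(p₁.2-p₂.2))) + b*c*((p₂.1-p₃.1)*(-(p₂.2-p₃.2)))
          + a*c*(((p₁.1-p₂.1)+(p₂.1-p₃.1))*(-(p₁.2-p₂.2) + -(p₂.2-p₃.2))))
          = -(2*(a*b*((p₁.1-p₂.1)*(p₁.2-p₂.2)) + b*c*((p₂.1-p₃.1)*(p₂.2-p₃.2))
          + a*c*(((p₁.1-p₂.1)+(p₂.1-p₃.1))*((p₁.2-p₂.2)+(p₂.2-p₃.2))))) := by ring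
      linarith
    · have hb1 : (p₁.1-p₂.1)*(p₁.2-p₂.2) ≤ 2*(V - Δz) := by linarith [habs2.2]
      have hb2 : (p₂.1-p₃.1)*(p₂.2-p₃.2) ≤ 2*(V - Δz) := by linarith [habs3.2]
      have hb3 : ((p₁.1-p₂.1)+(p₂.1-p₃.1))*((p₁.2-p₂.2)+(p₂.2-p₃.2)) ≤ 2*(V - Δz) := by
        have hid : ((p₁.1-p₂.1)+(p₂.1-p₃.1))*((p₁.2-p₂.2)+(p₂.2-p₃.2))
            = (p₁.1-p₃.1)*(p₁.2-p₃.2) := by ring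
        linarith [habs4.2]
      have hbd := tri_bound (p₁.1-p₂.1) (p₂.1-p₃.1) (p₁.2-p₂.2) (p₂.2-p₃.2) (V-Δz) a b c
        hVd0 hb1 hb2 hb3 ha hb hc habc
      linarith
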